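/- There exists a universal constant A > 0 such that for every integer N ≥ 1 and every M with 1 ≤ M < πm/8, each of the functions r_N, r_N^M, r_N^{M,0} together with their first and second derivatives is A-Lipschitz on I_N, i.e. satisfies |h(x) − h(y)| ≤ A·|x − y| for all x, y ∈ I_N. -/

import Mathlib

open MeasureTheory ProbabilityTheory Filter Real Topology

noncomputable def mval (N : ℕ) : ℝ := (N : ℝ) + 1 / 2

noncomputable def chiM (M : ℝ) : ℝ → ℝ := (Set.Icc (-M) M).indicator 1

noncomputable def convIter (φ : ℝ → ℝ) : ℕ → (ℝ → ℝ)
  | 0 => φ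
  | n + 1 => MeasureTheory.convolution (convIter φ n) φ (ContinuousLinearMap.lsmul ℝ ℝ) volume

noncomputable def SM (M : ℝ) (x : ℝ) : ℝ := convIter (chiM M) 7 x / convIter (chiM M) 7 0

noncomputable def rN (N : ℕ) (x : ℝ) : ℝ :=
  (1 / N) * ∑ n ∈ Finset.Icc 1 N, Real.cos (n * x / mval N)

noncomputable def rNM (N : ℕ) (M : ℝ) (x : ℝ) : ℝ := rN N x * SM M x

noncomputable def rhatM (N : ℕ) (M : ℝ) (n : ℕ) : ℝ :=
  (Real.sqrt (2 * π * mval N))⁻¹ *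
    ∫ x in (-(π * mval N))..(π * mval N), rNM N M x * Real.cos (n * x / mval N)


/-- `r̂_N(n) = √(πm)/(√2·N)` (for `1 ≤ n ≤ N`, which is how it is used below). -/
noncomputable def rhatN (N : ℕ) : ℝ := Real.sqrt (π * mval N) / (Real.sqrt 2 * N)

/-- The joint covariance function
`r_N^{M,0}(x) = Σ_{n=1}^N √(r̂_N(n)·r̂_N^M(n))·(√2/√(πm))·cos(nx/m)`. -/
noncomputable def rNM0 (N : ℕ) (M : ℝ) (x : ℝ) : ℝ :=
  ∑ n ∈ Finset.Icc 1 N,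
    Real.sqrt (rhatN N * rhatM N M n) * (Real.sqrt 2 / Real.sqrt (π * mval N)) *
      Real.cos (n * x / mval N)

/-- The `L²` norm of a function on `I_N = [−πm, πm]`. -/
noncomputable def l2norm (N : ℕ) (h : ℝ → ℝ) : ℝ :=
  Real.sqrt (∫ x in (-(π * mval N))..(π * mval N), h x ^ 2)

/-- `h` is `A`-Lipschitz on the set `s`. -/
def LipOn (A : ℝ) (s : Set ℝ) (h : ℝ → ℝ) : Prop :=
  ∀ x ∈ s, ∀ y ∈ s, |h x - h y| ≤ A * |x - y|


lemma lipOn_of_hasDerivAt {h h' : ℝ → ℝ} {A : ℝ}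
    (hd : ∀ x, HasDerivAt h (h' x) x) (hb : ∀ x, |h' x| ≤ A) (s : Set ℝ) :
    LipOn A s h := by
  intro x _ y _
  have := convex_univ.norm_image_sub_le_of_norm_hasDerivWithin_le (f := h) (f' := h')
    (fun z _ => (hd z).hasDerivWithinAt) (fun z _ => by simpa [Real.norm_eq_abs] using hb z)
    (Set.mem_univ y) (Set.mem_univ x)
  simpa [Real.norm_eq_abs] using this

noncomputable def cosSum (N : ℕ) (c : ℕ → ℝ) (x : ℝ) : ℝ :=
  ∑ n ∈ Finset.Icc 1 N, c n * Real.cos (n * x / mval N)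

noncomputable def sinSum (N : ℕ) (c : ℕ → ℝ) (x : ℝ) : ℝ :=
  ∑ n ∈ Finset.Icc 1 N, c n * Real.sin (n * x / mval N)

lemma mval_pos (N : ℕ) : (0:ℝ) < mval N := by unfold mval; positivity

lemma hasDerivAt_lin (N : ℕ) (n : ℕ) (x : ℝ) :
    HasDerivAt (fun y : ℝ => (n:ℝ) * y / mval N) ((n:ℝ)/mval N) x := by
  simpa using ((hasDerivAt_id x).const_mul (n:ℝ)).div_const (mval N)

lemma hasDerivAt_cosSum (N : ℕ) (c : ℕ → ℝ) (x : ℝ) :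
    HasDerivAt (cosSum N c) (sinSum N (fun n => -(c n * (n / mval N))) x) x := by
  apply HasDerivAt.fun_sum
  intro n _
  have h2 := (Real.hasDerivAt_cos ((n:ℝ) * x / mval N)).comp x (hasDerivAt_lin N n x)
  convert h2.const_mul (c n) using 1
  all_goals first | rfl | ring

lemma hasDerivAt_sinSum (N : ℕ) (c : ℕ → ℝ) (x : ℝ) :
    HasDerivAt (sinSum N c) (cosSum N (fun n => c n * (n / mval N)) x) x := by
  apply HasDerivAt.fun_sum
  intro n _
  have h2 := (Real.hasDerivAt_sin ((n:ℝ) * x / mval N)).comp x (hasDerivAt_lin N n x)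
  convert h2.const_mul (c n) using 1
  all_goals first | rfl | ring

lemma deriv_cosSum (N : ℕ) (c : ℕ → ℝ) :
    deriv (cosSum N c) = sinSum N (fun n => -(c n * (n / mval N))) :=
  funext fun x => (hasDerivAt_cosSum N c x).deriv

lemma deriv_sinSum (N : ℕ) (c : ℕ → ℝ) :
    deriv (sinSum N c) = cosSum N (fun n => c n * (n / mval N)) :=
  funext fun x => (hasDerivAt_sinSum N c x).deriv

lemma abs_cosSum_le (N : ℕ) (c : ℕ → ℝ) (x : ℝ) :
    |cosSum N c x| ≤ ∑ n ∈ Finset.Icc 1 N, |c n| := by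
  refine (Finset.abs_sum_le_sum_abs _ _).trans (Finset.sum_le_sum fun n _ => ?_)
  rw [abs_mul]
  exact mul_le_of_le_one_right (abs_nonneg _) (Real.abs_cos_le_one _)

lemma abs_sinSum_le (N : ℕ) (c : ℕ → ℝ) (x : ℝ) :
    |sinSum N c x| ≤ ∑ n ∈ Finset.Icc 1 N, |c n| := by
  refine (Finset.abs_sum_le_sum_abs _ _).trans (Finset.sum_le_sum fun n _ => ?_)
  rw [abs_mul]
  exact mul_le_of_le_one_right (abs_nonneg _) (Real.abs_sin_le_one _)

lemma sum_abs_step (N : ℕ) (c : ℕ → ℝ) :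
    ∑ n ∈ Finset.Icc 1 N, |c n * (n / mval N)| ≤ ∑ n ∈ Finset.Icc 1 N, |c n| := by
  refine Finset.sum_le_sum fun n hn => ?_
  rw [abs_mul]
  refine mul_le_of_le_one_right (abs_nonneg _) ?_
  rw [abs_div, abs_of_nonneg (mval_pos N).le, Nat.abs_cast, div_le_one (mval_pos N)]
  have h := (Finset.mem_Icc.1 hn).2
  have : (n:ℝ) ≤ N := Nat.cast_le.2 h
  unfold mval; linarith

lemma cosSum_lip_all (N : ℕ) (c : ℕ → ℝ) (B : ℝ)
    (hB : ∑ n ∈ Finset.Icc 1 N, |c n| ≤ B) (s : Set ℝ) :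
    LipOn B s (cosSum N c) ∧ LipOn B s (deriv (cosSum N c)) ∧
      LipOn B s (deriv (deriv (cosSum N c))) := by
  set c1 : ℕ → ℝ := fun n => -(c n * (n / mval N)) with hc1
  set c2 : ℕ → ℝ := fun n => c1 n * (n / mval N) with hc2
  set c3 : ℕ → ℝ := fun n => -(c2 n * (n / mval N)) with hc3
  have h1 : ∑ n ∈ Finset.Icc 1 N, |c1 n| ≤ B := by
    refine le_trans ?_ hB
    simpa [hc1, abs_mul] using sum_abs_step N c
  have h2 : ∑ n ∈ Finset.Icc 1 N, |c2 n| ≤ B :=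
    le_trans (sum_abs_step N c1) h1
  have h3 : ∑ n ∈ Finset.Icc 1 N, |c3 n| ≤ B := by
    refine le_trans ?_ h2
    simpa [hc3, abs_mul] using sum_abs_step N c2
  refine ⟨?_, ?_, ?_⟩
  · exact lipOn_of_hasDerivAt (hasDerivAt_cosSum N c)
      (fun x => (abs_sinSum_le N c1 x).trans h1) s
  · rw [deriv_cosSum]
    exact lipOn_of_hasDerivAt (hasDerivAt_sinSum N c1)
      (fun x => (abs_cosSum_le N c2 x).trans h2) s
  · rw [deriv_cosSum, deriv_sinSum]
    exact lipOn_of_hasDerivAt (hasDerivAt_cosSum N c2)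
      (fun x => (abs_sinSum_le N c3 x).trans h3) s

noncomputable def Tc (M : ℝ) (f : ℝ → ℝ) (x : ℝ) : ℝ := ∫ t in (x - M)..(x + M), f t

noncomputable def cI (M : ℝ) : ℕ → ℝ → ℝ
  | 0 => chiM M
  | k + 1 => Tc M (cI M k)

lemma Tc_eq_sub {f : ℝ → ℝ} (M : ℝ) (hf : Integrable f) (x : ℝ) :
    Tc M f x = (∫ t in (0:ℝ)..(x + M), f t) - ∫ t in (0:ℝ)..(x - M), f t := by
  have h1 := intervalIntegral.integral_add_adjacent_intervals (μ := volume) (f := f)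
    (a := (0:ℝ)) (b := x - M) (c := x + M) hf.intervalIntegrable hf.intervalIntegrable
  unfold Tc
  linarith

lemma Tc_continuous {f : ℝ → ℝ} (M : ℝ) (hf : Integrable f) : Continuous (Tc M f) := by
  have hF : Continuous (fun y => ∫ t in (0:ℝ)..y, f t) := hf.continuous_primitive 0
  have heq : Tc M f = fun x => (∫ t in (0:ℝ)..(x + M), f t) - ∫ t in (0:ℝ)..(x - M), f t :=
    funext (Tc_eq_sub M hf)
  rw [heq]
  exact (hF.comp (continuous_id.add continuous_const)).sub
    (hF.comp (continuous_id.sub continuous_const))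

lemma Tc_hasDerivAt {f : ℝ → ℝ} (M : ℝ) (hf : Integrable f) (hc : Continuous f) (x : ℝ) :
    HasDerivAt (Tc M f) (f (x + M) - f (x - M)) x := by
  have h1 : ∀ y : ℝ, HasDerivAt (fun y => ∫ t in (0:ℝ)..y, f t) (f y) y := fun y =>
    intervalIntegral.integral_hasDerivAt_right hf.intervalIntegrable
      (hc.stronglyMeasurable.stronglyMeasurableAtFilter) hc.continuousAt
  have h2 : HasDerivAt (fun y : ℝ => ∫ t in (0:ℝ)..(y + M), f t) (f (x + M)) x := by
    simpa [Function.comp_def] using (h1 (x + M)).comp x ((hasDerivAt_id x).add_const M)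
  have h3 : HasDerivAt (fun y : ℝ => ∫ t in (0:ℝ)..(y - M), f t) (f (x - M)) x := by
    simpa [Function.comp_def] using (h1 (x - M)).comp x ((hasDerivAt_id x).sub_const M)
  have heq : Tc M f = fun x => (∫ t in (0:ℝ)..(x + M), f t) - ∫ t in (0:ℝ)..(x - M), f t :=
    funext (Tc_eq_sub M hf)
  rw [heq]
  exact h2.sub h3

lemma cI_facts (M : ℝ) (hM : 1 ≤ M) : ∀ k : ℕ, Integrable (cI M k) volume ∧
    (∀ x, 0 ≤ cI M k x) ∧ (∀ x, cI M k x ≤ (2 * M) ^ k) ∧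
    (∀ x : ℝ, ((k : ℝ) + 1) * M < |x| → cI M k x = 0) := by
  have hM0 : (0:ℝ) < M := lt_of_lt_of_le one_pos hM
  intro k
  induction k with
  | zero =>
    refine ⟨?_, ?_, ?_, ?_⟩
    · show Integrable (chiM M) volume
      unfold chiM
      rw [integrable_indicator_iff measurableSet_Icc]
      exact integrableOn_const measure_Icc_lt_top.ne
    · intro x
      show 0 ≤ chiM M x
      unfold chiM
      exact Set.indicator_nonneg (fun _ _ => zero_le_one) x
    · intro x
      show chiM M x ≤ (2*M)^0
      unfold chiM
      rw [pow_zero, Set.indicator_apply]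
      split_ifs <;> norm_num
    · intro x hx
      show chiM M x = 0
      unfold chiM
      apply Set.indicator_of_notMem
      intro hmem
      rw [Set.mem_Icc] at hmem
      have : |x| ≤ M := abs_le.2 hmem
      simp only [Nat.cast_zero] at hx
      linarith
  | succ k ih =>
    obtain ⟨hi, h0, hub, hsupp⟩ := ih
    have hle : ∀ x : ℝ, x - M ≤ x + M := fun x => by linarith
    have hnn : ∀ x, 0 ≤ cI M (k+1) x := by
      intro x
      exact intervalIntegral.integral_nonneg (hle x) (fun t _ => h0 t)
    have hub' : ∀ x, cI M (k+1) x ≤ (2*M)^(k+1) := by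
      intro x
      have : Tc M (cI M k) x ≤ ∫ _t in (x - M)..(x + M), (2*M)^k := by
        apply intervalIntegral.integral_mono_on (hle x) hi.intervalIntegrable
          intervalIntegrable_const (fun t _ => hub t)
      calc cI M (k+1) x ≤ ∫ _t in (x - M)..(x + M), (2*M)^k := this
        _ = (2*M) * (2*M)^k := by
            rw [intervalIntegral.integral_const, smul_eq_mul]; ring
        _ = (2*M)^(k+1) := by rw [pow_succ]; ring
    have hsupp' : ∀ x : ℝ, ((k:ℝ) + 1 + 1) * M < |x| → cI M (k+1) x = 0 := by
      intro x hx
      have hzero : ∀ t ∈ Set.uIcc (x - M) (x + M), cI M k t = (0:ℝ) := by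
        intro t ht
        rw [Set.uIcc_of_le (hle x), Set.mem_Icc] at ht
        apply hsupp
        rcases abs_cases x with ⟨hax, _⟩ | ⟨hax, _⟩
        · have h1 : ((k:ℝ)+1)*M < t := by nlinarith [ht.1]
          have : 0 < t := lt_of_le_of_lt (mul_nonneg (by positivity) hM0.le) h1
          rw [abs_of_pos this]; exact h1
        · have h1 : t < -(((k:ℝ)+1)*M) := by nlinarith [ht.2]
          have ht0 : t < 0 := lt_of_lt_of_le h1 (neg_nonpos.2 (mul_nonneg (by positivity) hM0.le))
          rw [abs_of_neg ht0]; linarith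
      show Tc M (cI M k) x = 0
      unfold Tc
      rw [intervalIntegral.integral_congr (g := fun _ => (0:ℝ)) hzero]
      simp
    have hcont : Continuous (cI M (k+1)) := Tc_continuous M hi
    have hint : Integrable (cI M (k+1)) volume := by
      apply Continuous.integrable_of_hasCompactSupport hcont
      apply HasCompactSupport.intro (isCompact_Icc
        (a := -(((k:ℝ)+1+1)*M)) (b := ((k:ℝ)+1+1)*M))
      intro x hx
      apply hsupp'
      rw [Set.mem_Icc] at hx
      push_neg at hx
      rcases lt_or_ge x 0 with h | h
      · rw [abs_of_neg h]
        by_cases h2 : -(((k:ℝ)+1+1)*M) ≤ x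
        · have := hx h2; nlinarith
        · push_neg at h2; linarith
      · rw [abs_of_nonneg h]
        have h2 : -(((k:ℝ)+1+1)*M) ≤ x := le_trans (by nlinarith) h
        exact hx h2
    exact ⟨hint, hnn, hub', by push_cast; exact hsupp'⟩

lemma cI_cont (M : ℝ) (hM : 1 ≤ M) (k : ℕ) : Continuous (cI M (k+1)) :=
  Tc_continuous M (cI_facts M hM k).1

lemma cI_lower (M : ℝ) (hM : 1 ≤ M) : ∀ k, ∀ x ∈ Set.Icc (-M) M, M ^ k ≤ cI M k x := by
  have hM0 : (0:ℝ) < M := lt_of_lt_of_le one_pos hM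
  intro k
  induction k with
  | zero =>
    intro x hx
    show _ ≤ chiM M x
    unfold chiM
    rw [Set.indicator_of_mem hx]
    simp
  | succ k ih =>
    intro x hx
    obtain ⟨hi, h0, _, _⟩ := cI_facts M hM k
    rw [Set.mem_Icc] at hx
    show M^(k+1) ≤ Tc M (cI M k) x
    unfold Tc
    rw [← intervalIntegral.integral_add_adjacent_intervals (a := x - M) (b := x) (c := x + M)
      hi.intervalIntegrable hi.intervalIntegrable]
    rcases le_or_gt 0 x with h | h
    · have h2 : (0:ℝ) ≤ ∫ t in x..(x+M), cI M k t :=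
        intervalIntegral.integral_nonneg (by linarith) (fun t _ => h0 t)
      have h3 : (∫ _t in (x-M)..x, (M:ℝ)^k) ≤ ∫ t in (x-M)..x, cI M k t := by
        apply intervalIntegral.integral_mono_on (by linarith) intervalIntegrable_const
          hi.intervalIntegrable
        intro t ht
        rw [Set.mem_Icc] at ht
        exact ih t (Set.mem_Icc.2 ⟨by linarith [ht.1], by linarith [ht.2]⟩)
      rw [intervalIntegral.integral_const, smul_eq_mul] at h3
      have h4 : (x - (x - M)) * M^k = M^(k+1) := by rw [pow_succ]; ring
      linarith
    · have h2 : (0:ℝ) ≤ ∫ t in (x-M)..x, cI M k t :=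
        intervalIntegral.integral_nonneg (by linarith) (fun t _ => h0 t)
      have h3 : (∫ _t in x..(x+M), (M:ℝ)^k) ≤ ∫ t in x..(x+M), cI M k t := by
        apply intervalIntegral.integral_mono_on (by linarith) intervalIntegrable_const
          hi.intervalIntegrable
        intro t ht
        rw [Set.mem_Icc] at ht
        exact ih t (Set.mem_Icc.2 ⟨by linarith [ht.1], by linarith [ht.2]⟩)
      rw [intervalIntegral.integral_const, smul_eq_mul] at h3
      have h4 : (x + M - x) * M^k = M^(k+1) := by rw [pow_succ]; ring
      linarith

lemma conv_indicator (M : ℝ) (hM : 1 ≤ M) (f : ℝ → ℝ) (hf : Integrable f) (x : ℝ) :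
    MeasureTheory.convolution f (chiM M) (ContinuousLinearMap.lsmul ℝ ℝ) volume x = Tc M f x := by
  rw [MeasureTheory.convolution_def]
  have heq : ∀ t : ℝ, (ContinuousLinearMap.lsmul ℝ ℝ) (f t) (chiM M (x - t)) =
      (Set.Icc (x - M) (x + M)).indicator f t := by
    intro t
    simp only [ContinuousLinearMap.lsmul_apply, smul_eq_mul]
    unfold chiM
    rw [Set.indicator_apply, Set.indicator_apply]
    have hiff : (x - t ∈ Set.Icc (-M) M) ↔ (t ∈ Set.Icc (x - M) (x + M)) := by
      simp only [Set.mem_Icc]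
      constructor <;> intro h <;> exact ⟨by linarith [h.1, h.2], by linarith [h.1, h.2]⟩
    split_ifs with h1 h2 h2 <;> simp_all
  simp_rw [heq]
  rw [MeasureTheory.integral_indicator measurableSet_Icc]
  unfold Tc
  rw [intervalIntegral.integral_of_le (by linarith : x - M ≤ x + M),
    ← MeasureTheory.integral_Icc_eq_integral_Ioc]

lemma convIter_eq (M : ℝ) (hM : 1 ≤ M) : ∀ k, convIter (chiM M) k = cI M k := by
  intro k
  induction k with
  | zero => rfl
  | succ k ih =>
    funext x
    show MeasureTheory.convolution (convIter (chiM M) k) (chiM M)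
      (ContinuousLinearMap.lsmul ℝ ℝ) volume x = Tc M (cI M k) x
    rw [ih]
    exact conv_indicator M hM (cI M k) (cI_facts M hM k).1 x

lemma SM_eq (M : ℝ) (hM : 1 ≤ M) : SM M = fun x => cI M 7 x / cI M 7 0 := by
  unfold SM
  rw [convIter_eq M hM]

lemma c0_lower (M : ℝ) (hM : 1 ≤ M) : M ^ 7 ≤ cI M 7 0 :=
  cI_lower M hM 7 0 (Set.mem_Icc.2 ⟨by linarith, by linarith⟩)

lemma c0_pos (M : ℝ) (hM : 1 ≤ M) : 0 < cI M 7 0 :=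
  lt_of_lt_of_le (by positivity : (0:ℝ) < M ^ 7) (c0_lower M hM)

noncomputable def sder1 (M : ℝ) (x : ℝ) : ℝ := (cI M 6 (x+M) - cI M 6 (x-M)) / cI M 7 0

noncomputable def sder2 (M : ℝ) (x : ℝ) : ℝ :=
  ((cI M 5 (x+M+M) - cI M 5 (x+M-M)) - (cI M 5 (x-M+M) - cI M 5 (x-M-M))) / cI M 7 0

noncomputable def sder3 (M : ℝ) (x : ℝ) : ℝ :=
  (((cI M 4 (x+M+M+M) - cI M 4 (x+M+M-M)) - (cI M 4 (x+M-M+M) - cI M 4 (x+M-M-M))) -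
   ((cI M 4 (x-M+M+M) - cI M 4 (x-M+M-M)) - (cI M 4 (x-M-M+M) - cI M 4 (x-M-M-M)))) / cI M 7 0

lemma cI_succ_hasDerivAt (M : ℝ) (hM : 1 ≤ M) (k : ℕ) (y : ℝ) :
    HasDerivAt (cI M (k+2)) (cI M (k+1) (y+M) - cI M (k+1) (y-M)) y :=
  Tc_hasDerivAt M (cI_facts M hM (k+1)).1 (cI_cont M hM k) y

lemma SM_hasDerivAt (M : ℝ) (hM : 1 ≤ M) (x : ℝ) : HasDerivAt (SM M) (sder1 M x) x := by
  rw [SM_eq M hM]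
  exact (cI_succ_hasDerivAt M hM 5 x).div_const _

lemma hasDerivAt_addshift {f : ℝ → ℝ} {d : ℝ → ℝ} (h : ∀ y, HasDerivAt f (d y) y) (a x : ℝ) :
    HasDerivAt (fun y => f (y + a)) (d (x + a)) x := by
  simpa [Function.comp_def] using (h (x + a)).comp x ((hasDerivAt_id x).add_const a)

lemma hasDerivAt_subshift {f : ℝ → ℝ} {d : ℝ → ℝ} (h : ∀ y, HasDerivAt f (d y) y) (a x : ℝ) :
    HasDerivAt (fun y => f (y - a)) (d (x - a)) x := by
  simpa [Function.comp_def] using (h (x - a)).comp x ((hasDerivAt_id x).sub_const a)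

lemma sder1_hasDerivAt (M : ℝ) (hM : 1 ≤ M) (x : ℝ) :
    HasDerivAt (sder1 M) (sder2 M x) x := by
  unfold sder1 sder2
  exact (((hasDerivAt_addshift (cI_succ_hasDerivAt M hM 4) M x).sub
    (hasDerivAt_subshift (cI_succ_hasDerivAt M hM 4) M x))).div_const _

lemma sder2_hasDerivAt (M : ℝ) (hM : 1 ≤ M) (x : ℝ) :
    HasDerivAt (sder2 M) (sder3 M x) x := by
  unfold sder2 sder3
  have h5 := cI_succ_hasDerivAt M hM 3
  have hpp := hasDerivAt_addshift (f := fun y => cI M 5 (y+M))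
    (d := fun y => cI M 4 (y+M+M) - cI M 4 (y+M-M))
    (fun y => hasDerivAt_addshift h5 M y) M x
  have hpm := hasDerivAt_subshift (f := fun y => cI M 5 (y+M))
    (d := fun y => cI M 4 (y+M+M) - cI M 4 (y+M-M))
    (fun y => hasDerivAt_addshift h5 M y) M x
  have hmp := hasDerivAt_addshift (f := fun y => cI M 5 (y-M))
    (d := fun y => cI M 4 (y-M+M) - cI M 4 (y-M-M))
    (fun y => hasDerivAt_subshift h5 M y) M x
  have hmm := hasDerivAt_subshift (f := fun y => cI M 5 (y-M))
    (d := fun y => cI M 4 (y-M+M) - cI M 4 (y-M-M))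
    (fun y => hasDerivAt_subshift h5 M y) M x
  exact ((hpp.sub hmp).sub (hpm.sub hmm)).div_const _

lemma cI_pow_aux (M : ℝ) (hM : 1 ≤ M) {j : ℕ} (hj : j ≤ 7) : M ^ j ≤ M ^ 7 :=
  pow_le_pow_right₀ hM hj

lemma abs_sub_le_of_bounds {a b C : ℝ} (ha0 : 0 ≤ a) (ha : a ≤ C) (hb0 : 0 ≤ b) (hb : b ≤ C) :
    |a - b| ≤ C := abs_le.2 ⟨by linarith, by linarith⟩

lemma SM_abs_le (M : ℝ) (hM : 1 ≤ M) (x : ℝ) : |SM M x| ≤ 128 := by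
  rw [SM_eq M hM]
  obtain ⟨_, h0, hub, _⟩ := cI_facts M hM 7
  have hc0 := c0_pos M hM
  rw [abs_div, abs_of_pos hc0, div_le_iff₀ hc0]
  have h1 : |cI M 7 x| ≤ (2*M)^7 := by rw [abs_of_nonneg (h0 x)]; exact hub x
  have h2 : (2*M)^7 = 128 * M^7 := by ring
  nlinarith [c0_lower M hM]

lemma sder1_abs_le (M : ℝ) (hM : 1 ≤ M) (x : ℝ) : |sder1 M x| ≤ 128 := by
  unfold sder1
  obtain ⟨_, h0, hub, _⟩ := cI_facts M hM 6
  have hc0 := c0_pos M hM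
  rw [abs_div, abs_of_pos hc0, div_le_iff₀ hc0]
  have h1 : |cI M 6 (x+M) - cI M 6 (x-M)| ≤ (2*M)^6 :=
    abs_sub_le_of_bounds (h0 _) (hub _) (h0 _) (hub _)
  have h2 : (2*M)^6 = 64 * M^6 := by ring
  have h3 : M^6 ≤ M^7 := cI_pow_aux M hM (by norm_num)
  nlinarith [c0_lower M hM]

lemma sder2_abs_le (M : ℝ) (hM : 1 ≤ M) (x : ℝ) : |sder2 M x| ≤ 128 := by
  unfold sder2
  obtain ⟨_, h0, hub, _⟩ := cI_facts M hM 5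
  have hc0 := c0_pos M hM
  rw [abs_div, abs_of_pos hc0, div_le_iff₀ hc0]
  have h1 : |cI M 5 (x+M+M) - cI M 5 (x+M-M)| ≤ (2*M)^5 :=
    abs_sub_le_of_bounds (h0 _) (hub _) (h0 _) (hub _)
  have h2 : |cI M 5 (x-M+M) - cI M 5 (x-M-M)| ≤ (2*M)^5 :=
    abs_sub_le_of_bounds (h0 _) (hub _) (h0 _) (hub _)
  have h3 := abs_sub (cI M 5 (x+M+M) - cI M 5 (x+M-M)) (cI M 5 (x-M+M) - cI M 5 (x-M-M))
  have h4 : (2:ℝ)*(2*M)^5 = 64 * M^5 := by ring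
  have h5 : M^5 ≤ M^7 := cI_pow_aux M hM (by norm_num)
  nlinarith [c0_lower M hM]

lemma sder3_abs_le (M : ℝ) (hM : 1 ≤ M) (x : ℝ) : |sder3 M x| ≤ 128 := by
  unfold sder3
  obtain ⟨_, h0, hub, _⟩ := cI_facts M hM 4
  have hc0 := c0_pos M hM
  rw [abs_div, abs_of_pos hc0, div_le_iff₀ hc0]
  have h1 : |cI M 4 (x+M+M+M) - cI M 4 (x+M+M-M)| ≤ (2*M)^4 :=
    abs_sub_le_of_bounds (h0 _) (hub _) (h0 _) (hub _)
  have h2 : |cI M 4 (x+M-M+M) - cI M 4 (x+M-M-M)| ≤ (2*M)^4 :=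
    abs_sub_le_of_bounds (h0 _) (hub _) (h0 _) (hub _)
  have h3 : |cI M 4 (x-M+M+M) - cI M 4 (x-M+M-M)| ≤ (2*M)^4 :=
    abs_sub_le_of_bounds (h0 _) (hub _) (h0 _) (hub _)
  have h4 : |cI M 4 (x-M-M+M) - cI M 4 (x-M-M-M)| ≤ (2*M)^4 :=
    abs_sub_le_of_bounds (h0 _) (hub _) (h0 _) (hub _)
  have h5 := abs_sub (cI M 4 (x+M+M+M) - cI M 4 (x+M+M-M)) (cI M 4 (x+M-M+M) - cI M 4 (x+M-M-M))
  have h6 := abs_sub (cI M 4 (x-M+M+M) - cI M 4 (x-M+M-M)) (cI M 4 (x-M-M+M) - cI M 4 (x-M-M-M))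
  have h7 := abs_sub (cI M 4 (x+M+M+M) - cI M 4 (x+M+M-M) - (cI M 4 (x+M-M+M) - cI M 4 (x+M-M-M)))
    (cI M 4 (x-M+M+M) - cI M 4 (x-M+M-M) - (cI M 4 (x-M-M+M) - cI M 4 (x-M-M-M)))
  have h8 : (4:ℝ)*(2*M)^4 = 64 * M^4 := by ring
  have h9 : M^4 ≤ M^7 := cI_pow_aux M hM (by norm_num)
  nlinarith [c0_lower M hM]

lemma cI_meas (M : ℝ) (hM : 1 ≤ M) : ∀ k, Measurable (cI M k)
  | 0 => measurable_const.indicator measurableSet_Icc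
  | (k+1) => (cI_cont M hM k).measurable

lemma Tc_eq_indicator_integral (M : ℝ) (hM : 1 ≤ M) (f : ℝ → ℝ) (x : ℝ) :
    Tc M f x = ∫ t, (Set.Icc (x - M) (x + M)).indicator f t := by
  unfold Tc
  rw [MeasureTheory.integral_indicator measurableSet_Icc,
    intervalIntegral.integral_of_le (by linarith : x - M ≤ x + M),
    ← MeasureTheory.integral_Icc_eq_integral_Ioc]

open intervalIntegral in
lemma CF_step (M : ℝ) (hM : 1 ≤ M) (k : ℕ) (ξ : ℝ) (hξ : ξ ≠ 0) :
    ∫ x, cI M (k+1) x * Real.cos (ξ * x) =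
      (2 * Real.sin (ξ * M) / ξ) * ∫ t, cI M k t * Real.cos (ξ * t) := by
  have hM0 : (0:ℝ) < M := lt_of_lt_of_le one_pos hM
  obtain ⟨hi, h0, hub, hsupp⟩ := cI_facts M hM k
  set f := cI M k with hf
  -- the two-variable function
  set F : ℝ × ℝ → ℝ := fun p => (Set.Icc (p.1 - M) (p.1 + M)).indicator f p.2 * Real.cos (ξ * p.1)
    with hF
  set a : ℝ := ((k:ℝ) + 1) * M with ha
  have ha0 : 0 < a := by positivity
  -- integrability of F on the product
  have hFmeas : AEStronglyMeasurable F (volume.prod volume) := by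
    have hS : MeasurableSet {p : ℝ × ℝ | |p.1 - p.2| ≤ M} := by
      apply measurableSet_le _ measurable_const
      exact (measurable_fst.sub measurable_snd).abs
    have : F = Set.indicator {p : ℝ × ℝ | |p.1 - p.2| ≤ M}
        (fun p => f p.2 * Real.cos (ξ * p.1)) := by
      funext p
      show (Set.Icc (p.1 - M) (p.1 + M)).indicator f p.2 * Real.cos (ξ * p.1) = _
      rw [Set.indicator_apply, Set.indicator_apply]
      have hiff : p.2 ∈ Set.Icc (p.1 - M) (p.1 + M) ↔ p ∈ {p : ℝ × ℝ | |p.1 - p.2| ≤ M} := by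
        simp only [Set.mem_Icc, Set.mem_setOf_eq, abs_le]
        constructor <;> intro h <;> exact ⟨by linarith [h.1, h.2], by linarith [h.1, h.2]⟩
      split_ifs with h1 h2 h2
      · rfl
      · exact absurd (hiff.1 h1) h2
      · exact absurd (hiff.2 h2) h1
      · simp
    rw [this]
    apply Measurable.aestronglyMeasurable
    exact Measurable.indicator
      (((cI_meas M hM k).comp measurable_snd).mul
        (Real.continuous_cos.measurable.comp (measurable_const.mul measurable_fst))) hS
  have hFint : Integrable F (volume.prod volume) := by
    set R : Set (ℝ × ℝ) := Set.Icc (-(a+M)) (a+M) ×ˢ Set.Icc (-a) a with hR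
    have hRmeas : MeasurableSet R := measurableSet_Icc.prod measurableSet_Icc
    have hbint : Integrable (R.indicator fun _ => (2*M)^k) (volume.prod volume) := by
      rw [integrable_indicator_iff hRmeas]
      refine integrableOn_const ?_
      rw [hR, MeasureTheory.Measure.prod_prod]
      exact (ENNReal.mul_lt_top measure_Icc_lt_top measure_Icc_lt_top).ne
    apply Integrable.mono' hbint hFmeas
    apply Filter.Eventually.of_forall
    intro p
    rw [Real.norm_eq_abs]
    by_cases hp : p ∈ R
    · rw [Set.indicator_of_mem hp]
      have h1 : |(Set.Icc (p.1 - M) (p.1 + M)).indicator f p.2| ≤ (2*M)^k := by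
        rw [Set.indicator_apply]
        split_ifs
        · rw [abs_of_nonneg (h0 _)]; exact hub _
        · simp; positivity
      calc |F p| ≤ |(Set.Icc (p.1 - M) (p.1 + M)).indicator f p.2| * 1 := by
            rw [hF, abs_mul]
            exact mul_le_mul_of_nonneg_left (Real.abs_cos_le_one _) (abs_nonneg _)
        _ ≤ (2*M)^k := by rw [mul_one]; exact h1
    · rw [Set.indicator_of_notMem hp]
      have : F p = 0 := by
        rw [hR, Set.mem_prod] at hp
        push_neg at hp
        rw [hF]
        by_cases h2 : p.2 ∈ Set.Icc (-a) a
        · have h1 : p.1 ∉ Set.Icc (-(a+M)) (a+M) := fun hc => hp hc h2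
          rw [Set.mem_Icc] at h1 h2
          push_neg at h1
          have hind : p.2 ∉ Set.Icc (p.1 - M) (p.1 + M) := by
            rw [Set.mem_Icc]
            intro hc
            rcases le_or_gt (-(a+M)) p.1 with hge | hlt
            · have := h1 hge; obtain ⟨hc1, hc2⟩ := hc; linarith [h2.2]
            · obtain ⟨hc1, hc2⟩ := hc; linarith [h2.1]
          show (Set.Icc (p.1 - M) (p.1 + M)).indicator f p.2 * Real.cos (ξ * p.1) = 0
          rw [Set.indicator_of_notMem hind, zero_mul]
        · rw [Set.mem_Icc] at h2
          push_neg at h2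
          have hzero : f p.2 = 0 := by
            apply hsupp
            rcases le_or_gt (-a) p.2 with hge | hlt
            · have := h2 hge
              rw [abs_of_pos (lt_of_le_of_lt ha0.le this)]; exact this
            · rw [abs_of_neg (by linarith : p.2 < 0)]; linarith
          show (Set.Icc (p.1 - M) (p.1 + M)).indicator f p.2 * Real.cos (ξ * p.1) = 0
          rw [Set.indicator_apply]
          split_ifs <;> simp [hzero]
      rw [this]; simp
  -- step 1: write LHS as double integral
  have step1 : ∫ x, cI M (k+1) x * Real.cos (ξ * x) = ∫ x, ∫ t, F (x, t) := by
    congr 1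
    funext x
    show Tc M f x * Real.cos (ξ * x) = _
    rw [Tc_eq_indicator_integral M hM f x, ← MeasureTheory.integral_mul_const]
  -- swap
  have step2 : ∫ x, ∫ t, F (x, t) = ∫ t, ∫ x, F (x, t) :=
    MeasureTheory.integral_integral_swap hFint
  -- inner integral
  have step3 : ∀ t : ℝ, ∫ x, F (x, t) = f t * (2 * Real.sin (ξ * M) / ξ * Real.cos (ξ * t)) := by
    intro t
    have hrw : ∀ x : ℝ, F (x, t) =
        (Set.Icc (t - M) (t + M)).indicator (fun x => f t * Real.cos (ξ * x)) x := by
      intro x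
      show (Set.Icc (x - M) (x + M)).indicator f t * Real.cos (ξ * x) = _
      rw [Set.indicator_apply, Set.indicator_apply]
      have hiff : t ∈ Set.Icc (x - M) (x + M) ↔ x ∈ Set.Icc (t - M) (t + M) := by
        simp only [Set.mem_Icc]
        constructor <;> intro h <;> exact ⟨by linarith [h.1, h.2], by linarith [h.1, h.2]⟩
      split_ifs with h1 h2 h2
      · rfl
      · exact absurd (hiff.1 h1) h2
      · exact absurd (hiff.2 h2) h1
      · simp
    simp_rw [hrw]
    rw [MeasureTheory.integral_indicator measurableSet_Icc,
      MeasureTheory.integral_Icc_eq_integral_Ioc,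
      ← intervalIntegral.integral_of_le (by linarith : t - M ≤ t + M)]
    rw [intervalIntegral.integral_const_mul]
    have hval : ∫ x in (t-M)..(t+M), Real.cos (ξ * x) =
        (Real.sin (ξ*(t+M)) - Real.sin (ξ*(t-M)))/ξ := by
      rw [intervalIntegral.integral_comp_mul_left (fun y => Real.cos y) hξ,
        integral_cos, smul_eq_mul]
      ring
    rw [hval]
    have hid : (Real.sin (ξ*(t+M)) - Real.sin (ξ*(t-M)))/ξ =
        2 * Real.sin (ξ * M) / ξ * Real.cos (ξ * t) := by
      have e1 : ξ*(t+M) = ξ*t + ξ*M := by ring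
      have e2 : ξ*(t-M) = ξ*t - ξ*M := by ring
      rw [e1, e2, Real.sin_add, Real.sin_sub]
      field_simp
      ring
    rw [hid]
  -- conclude
  rw [step1, step2]
  simp_rw [step3]
  rw [← MeasureTheory.integral_const_mul]
  congr 1
  funext t
  ring

open intervalIntegral in
lemma CF_base (M : ℝ) (hM : 1 ≤ M) (ξ : ℝ) (hξ : ξ ≠ 0) :
    ∫ x, cI M 0 x * Real.cos (ξ * x) = 2 * Real.sin (ξ * M) / ξ := by
  have hrw : ∀ x : ℝ, cI M 0 x * Real.cos (ξ * x) =
      (Set.Icc (-M) M).indicator (fun x => Real.cos (ξ * x)) x := by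
    intro x
    show chiM M x * _ = _
    unfold chiM
    rw [Set.indicator_apply, Set.indicator_apply]
    split_ifs <;> simp
  simp_rw [hrw]
  rw [MeasureTheory.integral_indicator measurableSet_Icc,
    MeasureTheory.integral_Icc_eq_integral_Ioc,
    ← intervalIntegral.integral_of_le (by linarith : -M ≤ M),
    intervalIntegral.integral_comp_mul_left (fun y => Real.cos y) hξ, integral_cos, smul_eq_mul]
  have e : ξ * (-M) = -(ξ * M) := by ring
  rw [e, Real.sin_neg]
  field_simp
  ring

lemma CF7_nonneg (M : ℝ) (hM : 1 ≤ M) (ξ : ℝ) :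
    0 ≤ ∫ x, cI M 7 x * Real.cos (ξ * x) := by
  rcases eq_or_ne ξ 0 with h | h
  · subst h
    simp only [zero_mul, Real.cos_zero, mul_one]
    exact MeasureTheory.integral_nonneg (cI_facts M hM 7).2.1
  · have E : ∀ j : ℕ, ∫ x, cI M (j+1) x * Real.cos (ξ * x) =
        (2 * Real.sin (ξ * M) / ξ) ^ (j+2) := by
      intro j
      induction j with
      | zero => rw [CF_step M hM 0 ξ h, CF_base M hM ξ h]; ring
      | succ j ih => rw [CF_step M hM (j+1) ξ h, ih]; ring
    have h7 := E 6
    norm_num at h7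
    rw [h7]
    positivity

lemma SM_cont (M : ℝ) (hM : 1 ≤ M) : Continuous (SM M) := by
  rw [SM_eq M hM]
  exact (cI_cont M hM 6).div_const _

lemma J_nonneg (N : ℕ) (M : ℝ) (hM : 1 ≤ M) (hMP : 8 * M < π * mval N) (ξ : ℝ) :
    0 ≤ ∫ x in (-(π * mval N))..(π * mval N), SM M x * Real.cos (ξ * x) := by
  have hc0 := c0_pos M hM
  have hP : 0 < π * mval N := by linarith
  have hsupp := (cI_facts M hM 7).2.2.2
  have heq : ∫ x in (-(π * mval N))..(π * mval N), SM M x * Real.cos (ξ * x)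
      = (∫ x, cI M 7 x * Real.cos (ξ * x)) / cI M 7 0 := by
    have h1 : ∀ x, SM M x * Real.cos (ξ * x) = (cI M 7 x * Real.cos (ξ * x)) / cI M 7 0 := by
      intro x
      rw [SM_eq M hM]
      ring
    simp_rw [h1]
    rw [intervalIntegral.integral_div]
    congr 1
    rw [intervalIntegral.integral_of_le (by linarith)]
    apply MeasureTheory.setIntegral_eq_integral_of_forall_compl_eq_zero
    intro x hx
    have habs : 8 * M < |x| := by
      simp only [Set.mem_Ioc, not_and_or, not_lt, not_le] at hx
      rcases hx with h | h
      · rw [abs_of_nonpos (by linarith)]; linarith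
      · rw [abs_of_pos (by linarith)]; linarith
    have hz : cI M 7 x = 0 := hsupp x (by push_cast; linarith)
    rw [hz, zero_mul]
  rw [heq]
  exact div_nonneg (CF7_nonneg M hM ξ) hc0.le

lemma rhatM_nonneg (N : ℕ) (hN : 1 ≤ N) (M : ℝ) (hM : 1 ≤ M)
    (hMP : 8 * M < π * mval N) (n : ℕ) : 0 ≤ rhatM N M n := by
  unfold rhatM
  apply mul_nonneg (inv_nonneg.2 (Real.sqrt_nonneg _))
  have hSM := SM_cont M hM
  have hm0 : mval N ≠ 0 := ne_of_gt (mval_pos N)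
  have expand : ∀ x : ℝ, rNM N M x * Real.cos (n * x / mval N) =
      ∑ k ∈ Finset.Icc 1 N,
        ((1/(2*(N:ℝ))) * (SM M x * Real.cos ((((k:ℝ)+n)/mval N) * x))
          + (1/(2*(N:ℝ))) * (SM M x * Real.cos ((((k:ℝ)-n)/mval N) * x))) := by
    intro x
    unfold rNM rN
    rw [Finset.mul_sum, Finset.sum_mul, Finset.sum_mul]
    apply Finset.sum_congr rfl
    intro k _
    have e1 : (((k:ℝ)+n)/mval N) * x = (k:ℝ)*x/mval N + (n:ℝ)*x/mval N := by
      field_simp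
    have e2 : (((k:ℝ)-n)/mval N) * x = (k:ℝ)*x/mval N - (n:ℝ)*x/mval N := by
      field_simp
    rw [e1, e2, Real.cos_add, Real.cos_sub]
    ring
  have hpiece : ∀ ξ : ℝ, IntervalIntegrable
      (fun x => (1/(2*(N:ℝ))) * (SM M x * Real.cos (ξ * x))) volume
      (-(π * mval N)) (π * mval N) := fun ξ =>
    (continuous_const.mul (hSM.mul (Real.continuous_cos.comp
      (continuous_const.mul continuous_id)))).intervalIntegrable _ _
  rw [intervalIntegral.integral_congr (fun x _ => expand x)]
  rw [intervalIntegral.integral_finset_sum (fun k _ => (hpiece _).add (hpiece _))]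
  apply Finset.sum_nonneg
  intro k _
  rw [intervalIntegral.integral_add (hpiece _) (hpiece _),
    intervalIntegral.integral_const_mul, intervalIntegral.integral_const_mul]
  have hJ1 := J_nonneg N M hM hMP (((k:ℝ)+n)/mval N)
  have hJ2 := J_nonneg N M hM hMP (((k:ℝ)-n)/mval N)
  have hc : (0:ℝ) ≤ 1/(2*(N:ℝ)) := by positivity
  exact add_nonneg (mul_nonneg hc hJ1) (mul_nonneg hc hJ2)

open intervalIntegral in
lemma cos_int_zero (N : ℕ) (j : ℤ) (hj : j ≠ 0) :
    ∫ x in (-(π * mval N))..(π * mval N), Real.cos (((j:ℝ)/mval N) * x) = 0 := by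
  have hm := mval_pos N
  have hc : ((j:ℝ)/mval N) ≠ 0 := div_ne_zero (Int.cast_ne_zero.2 hj) (ne_of_gt hm)
  rw [intervalIntegral.integral_comp_mul_left (fun y => Real.cos y) hc, integral_cos, smul_eq_mul]
  have e1 : (j:ℝ)/mval N * (π * mval N) = j * π := by field_simp
  have e2 : (j:ℝ)/mval N * (-(π * mval N)) = -((j:ℝ) * π) := by field_simp
  rw [e1, e2, Real.sin_neg, Real.sin_int_mul_pi]
  ring

lemma cos_orth (N : ℕ) (k l : ℕ) (hk : 1 ≤ k) (hl : 1 ≤ l) :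
    ∫ x in (-(π * mval N))..(π * mval N),
      Real.cos (k * x / mval N) * Real.cos (l * x / mval N) =
      if k = l then π * mval N else 0 := by
  have hm := mval_pos N
  have hcont : ∀ c : ℝ, Continuous (fun x : ℝ => Real.cos (c * x)) := fun c =>
    Real.continuous_cos.comp (continuous_const.mul continuous_id)
  have expand : ∀ x : ℝ, Real.cos (k * x / mval N) * Real.cos (l * x / mval N)
      = (1/2) * Real.cos ((((k:ℝ)+l)/mval N) * x)
        + (1/2) * Real.cos ((((k:ℝ)-l)/mval N) * x) := by
    intro x
    have e1 : (((k:ℝ)+l)/mval N) * x = (k:ℝ)*x/mval N + (l:ℝ)*x/mval N := by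
      field_simp
    have e2 : (((k:ℝ)-l)/mval N) * x = (k:ℝ)*x/mval N - (l:ℝ)*x/mval N := by
      field_simp
    rw [e1, e2, Real.cos_add, Real.cos_sub]
    ring
  rw [intervalIntegral.integral_congr (fun x _ => expand x),
    intervalIntegral.integral_add (f := fun x => (1/2:ℝ) * Real.cos ((((k:ℝ)+l)/mval N) * x))
      (g := fun x => (1/2:ℝ) * Real.cos ((((k:ℝ)-l)/mval N) * x))
      ((continuous_const.mul (hcont _)).intervalIntegrable _ _)
      ((continuous_const.mul (hcont _)).intervalIntegrable _ _),
    intervalIntegral.integral_const_mul, intervalIntegral.integral_const_mul]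
  have h1 : ∫ x in (-(π * mval N))..(π * mval N), Real.cos ((((k:ℝ)+l)/mval N) * x) = 0 := by
    have e : ((k:ℝ)+l) = (((k:ℤ)+l : ℤ):ℝ) := by push_cast; ring
    rw [e]
    exact cos_int_zero N ((k:ℤ)+l) (by omega)
  by_cases hkl : k = l
  · subst hkl
    rw [if_pos rfl, h1]
    have h2 : ∫ x in (-(π * mval N))..(π * mval N),
        Real.cos ((((k:ℝ)-k)/mval N) * x) = 2*(π * mval N) := by
      have heq : Set.EqOn (fun x : ℝ => Real.cos ((((k:ℝ)-k)/mval N) * x)) (fun _ => (1:ℝ))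
          (Set.uIcc (-(π * mval N)) (π * mval N)) := by
        intro x _
        norm_num
      rw [intervalIntegral.integral_congr heq, intervalIntegral.integral_const, smul_eq_mul]
      ring
    rw [h2]
    ring
  · rw [if_neg hkl, h1]
    have h2 : ∫ x in (-(π * mval N))..(π * mval N),
        Real.cos ((((k:ℝ)-l)/mval N) * x) = 0 := by
      have e : ((k:ℝ)-l) = (((k:ℤ)-l : ℤ):ℝ) := by push_cast; ring
      rw [e]
      exact cos_int_zero N ((k:ℤ)-l) (by omega)
    rw [h2]
    ring

lemma rN_cont (N : ℕ) : Continuous (rN N) := by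
  unfold rN
  exact continuous_const.mul (continuous_finset_sum _ fun n _ =>
    Real.continuous_cos.comp ((continuous_const.mul continuous_id).div_const _))

lemma rN_sq_integral (N : ℕ) (hN : 1 ≤ N) :
    ∫ x in (-(π * mval N))..(π * mval N), (rN N x)^2 = π * mval N / N := by
  have hterm : ∀ k l : ℕ, Continuous (fun x : ℝ =>
      (1/(N:ℝ))^2 * (Real.cos (k * x / mval N) * Real.cos (l * x / mval N))) := fun k l =>
    continuous_const.mul ((Real.continuous_cos.comp
      ((continuous_const.mul continuous_id).div_const _)).mul
      (Real.continuous_cos.comp ((continuous_const.mul continuous_id).div_const _)))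
  have expand : ∀ x : ℝ, (rN N x)^2 = ∑ k ∈ Finset.Icc 1 N, ∑ l ∈ Finset.Icc 1 N,
      (1/(N:ℝ))^2 * (Real.cos (k * x / mval N) * Real.cos (l * x / mval N)) := by
    intro x
    unfold rN
    rw [sq]
    rw [show ((1/(N:ℝ)) * ∑ n ∈ Finset.Icc 1 N, Real.cos (n * x / mval N)) *
        ((1/(N:ℝ)) * ∑ n ∈ Finset.Icc 1 N, Real.cos (n * x / mval N)) =
        (1/(N:ℝ))^2 * ((∑ n ∈ Finset.Icc 1 N, Real.cos (n * x / mval N)) *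
          ∑ n ∈ Finset.Icc 1 N, Real.cos (n * x / mval N)) from by ring]
    rw [Finset.sum_mul_sum]
    rw [Finset.mul_sum]
    apply Finset.sum_congr rfl
    intro k _
    rw [Finset.mul_sum]
  rw [intervalIntegral.integral_congr (fun x _ => expand x),
    intervalIntegral.integral_finset_sum (fun k _ =>
      (continuous_finset_sum _ fun l _ => hterm k l).intervalIntegrable _ _)]
  have hstep : ∀ k ∈ Finset.Icc 1 N, (∫ x in (-(π * mval N))..(π * mval N),
      ∑ l ∈ Finset.Icc 1 N,
        (1/(N:ℝ))^2 * (Real.cos (k * x / mval N) * Real.cos (l * x / mval N)))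
      = (1/(N:ℝ))^2 * (π * mval N) := by
    intro k hk
    rw [intervalIntegral.integral_finset_sum (fun l _ => (hterm k l).intervalIntegrable _ _)]
    have hkk := (Finset.mem_Icc.1 hk).1
    have : ∀ l ∈ Finset.Icc 1 N, (∫ x in (-(π * mval N))..(π * mval N),
        (1/(N:ℝ))^2 * (Real.cos (k * x / mval N) * Real.cos (l * x / mval N)))
        = (1/(N:ℝ))^2 * (if k = l then π * mval N else 0) := by
      intro l hl
      rw [intervalIntegral.integral_const_mul, cos_orth N k l hkk (Finset.mem_Icc.1 hl).1]
    rw [Finset.sum_congr rfl this, ← Finset.mul_sum, Finset.sum_ite_eq, if_pos hk]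
  rw [Finset.sum_congr rfl hstep, Finset.sum_const, Nat.card_Icc]
  have hN0 : (N:ℝ) ≠ 0 := Nat.cast_ne_zero.2 (by omega)
  simp only [Nat.add_sub_cancel, nsmul_eq_mul]
  field_simp

lemma SM_le_128 (M : ℝ) (hM : 1 ≤ M) (x : ℝ) : SM M x ≤ 128 :=
  le_of_abs_le (SM_abs_le M hM x)

lemma rhatM_sum_le (N : ℕ) (hN : 1 ≤ N) (M : ℝ) (hM : 1 ≤ M) :
    ∑ n ∈ Finset.Icc 1 N, rhatM N M n ≤
      128 * (π * mval N) / Real.sqrt (2 * π * mval N) := by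
  have hSM := SM_cont M hM
  have hrN := rN_cont N
  have hm := mval_pos N
  have hN0 : (N:ℝ) ≠ 0 := Nat.cast_ne_zero.2 (by omega)
  have hNpos : (0:ℝ) < N := by positivity
  unfold rhatM
  rw [← Finset.mul_sum]
  have hcos : ∀ n : ℕ, Continuous (fun x : ℝ => Real.cos (n * x / mval N)) := fun n =>
    Real.continuous_cos.comp ((continuous_const.mul continuous_id).div_const _)
  have h1 : ∑ n ∈ Finset.Icc 1 N,
      (∫ x in (-(π * mval N))..(π * mval N), rNM N M x * Real.cos (n * x / mval N))
      = ∫ x in (-(π * mval N))..(π * mval N), (N:ℝ) * ((rN N x)^2 * SM M x) := by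
    have hint : ∀ n ∈ Finset.Icc 1 N, IntervalIntegrable
        (fun x => rNM N M x * Real.cos (n * x / mval N)) volume
        (-(π * mval N)) (π * mval N) := by
      intro n _
      apply Continuous.intervalIntegrable
      have hc : Continuous (rNM N M) := by
        unfold rNM
        exact hrN.mul hSM
      exact hc.mul (hcos n)
    rw [← intervalIntegral.integral_finset_sum hint]
    apply intervalIntegral.integral_congr
    intro x _
    show ∑ n ∈ Finset.Icc 1 N, rNM N M x * Real.cos (n * x / mval N) = _
    rw [← Finset.mul_sum]
    have hsum : ∑ n ∈ Finset.Icc 1 N, Real.cos (n * x / mval N) = (N:ℝ) * rN N x := by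
      unfold rN
      field_simp
      refine Finset.sum_congr rfl fun _ _ => ?_
      ring_nf
    rw [hsum]
    unfold rNM
    ring
  rw [h1]
  have h2 : ∫ x in (-(π * mval N))..(π * mval N), (N:ℝ) * ((rN N x)^2 * SM M x)
      ≤ (N:ℝ) * (128 * (π * mval N / N)) := by
    rw [intervalIntegral.integral_const_mul]
    apply mul_le_mul_of_nonneg_left _ hNpos.le
    have hle : ∫ x in (-(π * mval N))..(π * mval N), (rN N x)^2 * SM M x
        ≤ ∫ x in (-(π * mval N))..(π * mval N), 128 * (rN N x)^2 := by
      apply intervalIntegral.integral_mono_on (by nlinarith [Real.pi_pos])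
        (((hrN.pow 2).mul hSM).intervalIntegrable _ _)
        ((continuous_const.mul (hrN.pow 2)).intervalIntegrable _ _)
      intro x _
      calc (rN N x)^2 * SM M x ≤ (rN N x)^2 * 128 :=
            mul_le_mul_of_nonneg_left (SM_le_128 M hM x) (sq_nonneg _)
        _ = 128 * (rN N x)^2 := by ring
    calc ∫ x in (-(π * mval N))..(π * mval N), (rN N x)^2 * SM M x
        ≤ ∫ x in (-(π * mval N))..(π * mval N), 128 * (rN N x)^2 := hle
      _ = 128 * (π * mval N / N) := by
          rw [intervalIntegral.integral_const_mul, rN_sq_integral N hN]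
  calc (Real.sqrt (2 * π * mval N))⁻¹ *
        ∫ x in (-(π * mval N))..(π * mval N), (N:ℝ) * ((rN N x)^2 * SM M x)
      ≤ (Real.sqrt (2 * π * mval N))⁻¹ * ((N:ℝ) * (128 * (π * mval N / N))) :=
        mul_le_mul_of_nonneg_left h2 (inv_nonneg.2 (Real.sqrt_nonneg _))
    _ = 128 * (π * mval N) / Real.sqrt (2 * π * mval N) := by
        field_simp

lemma coeff_sum_le (N : ℕ) (hN : 1 ≤ N) (M : ℝ) (hM : 1 ≤ M)
    (hMP : 8 * M < π * mval N) :
    ∑ n ∈ Finset.Icc 1 N,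
      Real.sqrt (rhatN N * rhatM N M n) * (Real.sqrt 2 / Real.sqrt (π * mval N)) ≤ 12 := by
  have hm := mval_pos N
  have hpm : (0:ℝ) < π * mval N := by positivity
  have hspm : (0:ℝ) < Real.sqrt (π * mval N) := Real.sqrt_pos.2 hpm
  have hs2 : (0:ℝ) < Real.sqrt 2 := Real.sqrt_pos.2 (by norm_num)
  have hN0 : (N:ℝ) ≠ 0 := Nat.cast_ne_zero.2 (by omega)
  have hNpos : (0:ℝ) < N := by positivity
  have hrhatN : (0:ℝ) ≤ rhatN N := by
    unfold rhatN
    positivity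
  set u : ℝ := Real.sqrt (π * mval N) / Real.sqrt 2 with hu
  have hu0 : 0 < u := by positivity
  -- sum of rhatN
  have hS1 : ∑ _n ∈ Finset.Icc 1 N, rhatN N = u := by
    rw [Finset.sum_const, Nat.card_Icc, nsmul_eq_mul]
    unfold rhatN
    simp only [Nat.add_sub_cancel]
    rw [hu, show (N:ℝ) * (Real.sqrt (π * mval N) / (Real.sqrt 2 * N)) =
      (Real.sqrt (π * mval N) / Real.sqrt 2) * ((N:ℝ)/(N:ℝ)) from by ring,
      div_self hN0, mul_one]
  -- sum of rhatM
  have e1 : Real.sqrt (π * mval N) * Real.sqrt (π * mval N) = π * mval N :=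
    Real.mul_self_sqrt hpm.le
  have e2 : Real.sqrt 2 * Real.sqrt 2 = (2:ℝ) := Real.mul_self_sqrt (by norm_num)
  have hS2 : ∑ n ∈ Finset.Icc 1 N, rhatM N M n ≤ 128 * u := by
    refine (rhatM_sum_le N hN M hM).trans (le_of_eq ?_)
    rw [hu, show (2:ℝ) * π * mval N = 2 * (π * mval N) from by ring,
      Real.sqrt_mul (by norm_num)]
    rw [div_eq_iff (by positivity), show 128 * (Real.sqrt (π * mval N) / Real.sqrt 2) *
      (Real.sqrt 2 * Real.sqrt (π * mval N)) = 128 * (Real.sqrt (π * mval N) *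
      Real.sqrt (π * mval N)) * (Real.sqrt 2 / Real.sqrt 2) from by ring, e1,
      div_self hs2.ne']
    ring
  rw [← Finset.sum_mul]
  have hCS : ∑ n ∈ Finset.Icc 1 N, Real.sqrt (rhatN N * rhatM N M n) ≤
      Real.sqrt (∑ _n ∈ Finset.Icc 1 N, rhatN N) *
        Real.sqrt (∑ n ∈ Finset.Icc 1 N, rhatM N M n) := by
    have := Real.sum_sqrt_mul_sqrt_le (Finset.Icc 1 N) (f := fun _ => rhatN N)
      (g := fun n => rhatM N M n) (fun _ => hrhatN)
      (fun n => rhatM_nonneg N hN M hM hMP n)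
    calc ∑ n ∈ Finset.Icc 1 N, Real.sqrt (rhatN N * rhatM N M n)
        = ∑ n ∈ Finset.Icc 1 N, Real.sqrt (rhatN N) * Real.sqrt (rhatM N M n) := by
          apply Finset.sum_congr rfl
          intro n _
          exact Real.sqrt_mul hrhatN _
      _ ≤ _ := this
  have hbound : Real.sqrt (∑ _n ∈ Finset.Icc 1 N, rhatN N) *
      Real.sqrt (∑ n ∈ Finset.Icc 1 N, rhatM N M n) ≤ Real.sqrt 128 * u := by
    rw [hS1]
    calc Real.sqrt u * Real.sqrt (∑ n ∈ Finset.Icc 1 N, rhatM N M n)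
        ≤ Real.sqrt u * Real.sqrt (128 * u) :=
          mul_le_mul_of_nonneg_left (Real.sqrt_le_sqrt hS2) (Real.sqrt_nonneg _)
      _ = Real.sqrt 128 * u := by
          rw [Real.sqrt_mul (by norm_num)]
          rw [show Real.sqrt u * (Real.sqrt 128 * Real.sqrt u) =
            Real.sqrt 128 * (Real.sqrt u * Real.sqrt u) from by ring,
            Real.mul_self_sqrt hu0.le]
  have hq : u * (Real.sqrt 2 / Real.sqrt (π * mval N)) = 1 := by
    rw [hu, div_mul_div_comm, div_eq_one_iff_eq (by positivity)]
    ring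
  calc (∑ n ∈ Finset.Icc 1 N, Real.sqrt (rhatN N * rhatM N M n)) *
        (Real.sqrt 2 / Real.sqrt (π * mval N))
      ≤ (Real.sqrt 128 * u) * (Real.sqrt 2 / Real.sqrt (π * mval N)) := by
        apply mul_le_mul_of_nonneg_right (hCS.trans hbound) (by positivity)
    _ = Real.sqrt 128 := by
        rw [mul_assoc, hq, mul_one]
    _ ≤ 12 := by
        rw [show (12:ℝ) = Real.sqrt 144 from ?_]
        · exact Real.sqrt_le_sqrt (by norm_num)
        · rw [show (144:ℝ) = 12^2 from by norm_num, Real.sqrt_sq (by norm_num)]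

lemma abs_mul_le' {a b A B : ℝ} (ha : |a| ≤ A) (hb : |b| ≤ B) (hA : 0 ≤ A) : |a*b| ≤ A*B := by
  rw [abs_mul]
  exact mul_le_mul ha hb (abs_nonneg _) hA

lemma lipOn_mono {A B : ℝ} {s : Set ℝ} {h : ℝ → ℝ} (hAB : A ≤ B) (hl : LipOn A s h) :
    LipOn B s h := fun x hx y hy =>
  (hl x hx y hy).trans (mul_le_mul_of_nonneg_right hAB (abs_nonneg _))

lemma rNM_lip (N : ℕ) (hN : 1 ≤ N) (M : ℝ) (hM : 1 ≤ M) (s : Set ℝ) :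
    LipOn 1024 s (rNM N M) ∧ LipOn 1024 s (deriv (rNM N M)) ∧
      LipOn 1024 s (deriv (deriv (rNM N M))) := by
  have hN0 : (N:ℝ) ≠ 0 := Nat.cast_ne_zero.2 (by omega)
  set c0 : ℕ → ℝ := fun _ => 1/(N:ℝ) with hc0
  set c1 : ℕ → ℝ := fun n => -(c0 n * (n / mval N)) with hc1
  set c2 : ℕ → ℝ := fun n => c1 n * (n / mval N) with hc2
  set c3 : ℕ → ℝ := fun n => -(c2 n * (n / mval N)) with hc3
  have hrNeq : rN N = cosSum N c0 := funext fun x => by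
    unfold rN cosSum; rw [Finset.mul_sum]
  have hsum0 : ∑ n ∈ Finset.Icc 1 N, |c0 n| = 1 := by
    have : ∀ n ∈ Finset.Icc 1 N, |c0 n| = 1/(N:ℝ) := fun n _ => by
      rw [hc0, abs_of_nonneg (by positivity : (0:ℝ) ≤ 1/(N:ℝ))]
    rw [Finset.sum_congr rfl this, Finset.sum_const, Nat.card_Icc, nsmul_eq_mul]
    simp only [Nat.add_sub_cancel]
    field_simp
  have hsum1 : ∑ n ∈ Finset.Icc 1 N, |c1 n| ≤ 1 := by
    refine le_trans ?_ hsum0.le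
    simpa [hc1, abs_mul] using sum_abs_step N c0
  have hsum2 : ∑ n ∈ Finset.Icc 1 N, |c2 n| ≤ 1 :=
    le_trans (sum_abs_step N c1) hsum1
  have hsum3 : ∑ n ∈ Finset.Icc 1 N, |c3 n| ≤ 1 := by
    refine le_trans ?_ hsum2
    simpa [hc3, abs_mul] using sum_abs_step N c2
  -- pointwise bounds
  have hp0 : ∀ x, |rN N x| ≤ 1 := fun x => by
    rw [hrNeq]; exact (abs_cosSum_le N c0 x).trans hsum0.le
  have hp1 : ∀ x, |sinSum N c1 x| ≤ 1 := fun x => (abs_sinSum_le N c1 x).trans hsum1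
  have hp2 : ∀ x, |cosSum N c2 x| ≤ 1 := fun x => (abs_cosSum_le N c2 x).trans hsum2
  have hp3 : ∀ x, |sinSum N c3 x| ≤ 1 := fun x => (abs_sinSum_le N c3 x).trans hsum3
  -- derivative chains
  have hd0 : ∀ x, HasDerivAt (rN N) (sinSum N c1 x) x := fun x => by
    rw [hrNeq]; exact hasDerivAt_cosSum N c0 x
  have hd1 : ∀ x, HasDerivAt (sinSum N c1) (cosSum N c2 x) x := fun x =>
    hasDerivAt_sinSum N c1 x
  have hd2 : ∀ x, HasDerivAt (cosSum N c2) (sinSum N c3 x) x := fun x =>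
    hasDerivAt_cosSum N c2 x
  set q1 : ℝ → ℝ := fun x => sinSum N c1 x * SM M x + rN N x * sder1 M x with hq1def
  set q2 : ℝ → ℝ := fun x => (cosSum N c2 x * SM M x + sinSum N c1 x * sder1 M x)
    + (sinSum N c1 x * sder1 M x + rN N x * sder2 M x) with hq2def
  set q3 : ℝ → ℝ := fun x =>
    ((sinSum N c3 x * SM M x + cosSum N c2 x * sder1 M x)
      + (cosSum N c2 x * sder1 M x + sinSum N c1 x * sder2 M x))
    + ((cosSum N c2 x * sder1 M x + sinSum N c1 x * sder2 M x)
      + (sinSum N c1 x * sder2 M x + rN N x * sder3 M x)) with hq3def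
  have hq0 : ∀ x, HasDerivAt (rNM N M) (q1 x) x := fun x =>
    (hd0 x).mul (SM_hasDerivAt M hM x)
  have hq1 : ∀ x, HasDerivAt q1 (q2 x) x := fun x =>
    ((hd1 x).mul (SM_hasDerivAt M hM x)).add ((hd0 x).mul (sder1_hasDerivAt M hM x))
  have hq2 : ∀ x, HasDerivAt q2 (q3 x) x := fun x =>
    (((hd2 x).mul (SM_hasDerivAt M hM x)).add ((hd1 x).mul (sder1_hasDerivAt M hM x))).add
      (((hd1 x).mul (sder1_hasDerivAt M hM x)).add ((hd0 x).mul (sder2_hasDerivAt M hM x)))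
  -- bounds on q1 q2 q3
  have hb1 : ∀ x, |q1 x| ≤ 256 := by
    intro x
    have t1 := abs_mul_le' (hp1 x) (SM_abs_le M hM x) zero_le_one
    have t2 := abs_mul_le' (hp0 x) (sder1_abs_le M hM x) zero_le_one
    calc |q1 x| ≤ |sinSum N c1 x * SM M x| + |rN N x * sder1 M x| := abs_add_le _ _
      _ ≤ 256 := by rw [one_mul] at t1 t2; linarith
  have hb2 : ∀ x, |q2 x| ≤ 512 := by
    intro x
    have t1 := abs_mul_le' (hp2 x) (SM_abs_le M hM x) zero_le_one
    have t2 := abs_mul_le' (hp1 x) (sder1_abs_le M hM x) zero_le_one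
    have t3 := abs_mul_le' (hp0 x) (sder2_abs_le M hM x) zero_le_one
    calc |q2 x| ≤ |cosSum N c2 x * SM M x + sinSum N c1 x * sder1 M x|
          + |sinSum N c1 x * sder1 M x + rN N x * sder2 M x| := abs_add_le _ _
      _ ≤ (|cosSum N c2 x * SM M x| + |sinSum N c1 x * sder1 M x|)
          + (|sinSum N c1 x * sder1 M x| + |rN N x * sder2 M x|) :=
          add_le_add (abs_add_le _ _) (abs_add_le _ _)
      _ ≤ 512 := by rw [one_mul] at t1 t2 t3; linarith
  have hb3 : ∀ x, |q3 x| ≤ 1024 := by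
    intro x
    have t1 := abs_mul_le' (hp3 x) (SM_abs_le M hM x) zero_le_one
    have t2 := abs_mul_le' (hp2 x) (sder1_abs_le M hM x) zero_le_one
    have t3 := abs_mul_le' (hp1 x) (sder2_abs_le M hM x) zero_le_one
    have t4 := abs_mul_le' (hp0 x) (sder3_abs_le M hM x) zero_le_one
    calc |q3 x| ≤ |(sinSum N c3 x * SM M x + cosSum N c2 x * sder1 M x)
          + (cosSum N c2 x * sder1 M x + sinSum N c1 x * sder2 M x)|
          + |(cosSum N c2 x * sder1 M x + sinSum N c1 x * sder2 M x)
          + (sinSum N c1 x * sder2 M x + rN N x * sder3 M x)| := abs_add_le _ _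
      _ ≤ (|sinSum N c3 x * SM M x + cosSum N c2 x * sder1 M x|
          + |cosSum N c2 x * sder1 M x + sinSum N c1 x * sder2 M x|)
          + (|cosSum N c2 x * sder1 M x + sinSum N c1 x * sder2 M x|
          + |sinSum N c1 x * sder2 M x + rN N x * sder3 M x|) :=
          add_le_add (abs_add_le _ _) (abs_add_le _ _)
      _ ≤ (|sinSum N c3 x * SM M x| + |cosSum N c2 x * sder1 M x|
          + (|cosSum N c2 x * sder1 M x| + |sinSum N c1 x * sder2 M x|))
          + ((|cosSum N c2 x * sder1 M x| + |sinSum N c1 x * sder2 M x|)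
          + (|sinSum N c1 x * sder2 M x| + |rN N x * sder3 M x|)) := by
          gcongr <;> exact abs_add_le _ _
      _ ≤ 1024 := by rw [one_mul] at t1 t2 t3 t4; linarith
  have hderiv1 : deriv (rNM N M) = q1 := funext fun x => (hq0 x).deriv
  have hderiv2 : deriv q1 = q2 := funext fun x => (hq1 x).deriv
  refine ⟨?_, ?_, ?_⟩
  · exact lipOn_of_hasDerivAt hq0 (fun x => (hb1 x).trans (by norm_num)) s
  · rw [hderiv1]
    exact lipOn_of_hasDerivAt hq1 (fun x => (hb2 x).trans (by norm_num)) s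
  · rw [hderiv1, hderiv2]
    exact lipOn_of_hasDerivAt hq2 hb3 s

/-- there is a universal `A > 0` such that for every `N ≥ 1` and
`1 ≤ M < πm/8`, each of `r_N`, `r_N^M`, `r_N^{M,0}` together with their first and second
derivatives is `A`-Lipschitz on `I_N = [−πm, πm]`. -/
theorem covariances_uniformly_lipschitz :
    ∃ A > (0 : ℝ), ∀ N : ℕ, 1 ≤ N → ∀ M : ℝ, 1 ≤ M → M < π * mval N / 8 →
      LipOn A (Set.Icc (-(π * mval N)) (π * mval N)) (rN N) ∧
      LipOn A (Set.Icc (-(π * mval N)) (π * mval N)) (deriv (rN N)) ∧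
      LipOn A (Set.Icc (-(π * mval N)) (π * mval N)) (deriv (deriv (rN N))) ∧
      LipOn A (Set.Icc (-(π * mval N)) (π * mval N)) (rNM N M) ∧
      LipOn A (Set.Icc (-(π * mval N)) (π * mval N)) (deriv (rNM N M)) ∧
      LipOn A (Set.Icc (-(π * mval N)) (π * mval N)) (deriv (deriv (rNM N M))) ∧
      LipOn A (Set.Icc (-(π * mval N)) (π * mval N)) (rNM0 N M) ∧
      LipOn A (Set.Icc (-(π * mval N)) (π * mval N)) (deriv (rNM0 N M)) ∧
      LipOn A (Set.Icc (-(π * mval N)) (π * mval N)) (deriv (deriv (rNM0 N M))) := by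
  refine ⟨1024, by norm_num, ?_⟩
  intro N hN M hM1 hMlt
  have hm := mval_pos N
  have hMP : 8 * M < π * mval N := by linarith
  have hN0 : (N:ℝ) ≠ 0 := Nat.cast_ne_zero.2 (by omega)
  have hrNeq : rN N = cosSum N (fun _ => 1/(N:ℝ)) := funext fun x => by
    unfold rN cosSum; rw [Finset.mul_sum]
  have hsum0 : ∑ n ∈ Finset.Icc 1 N, |(fun _ : ℕ => 1/(N:ℝ)) n| ≤ 1024 := by
    have habs : ∀ n ∈ Finset.Icc 1 N, |(1:ℝ)/(N:ℝ)| = 1/(N:ℝ) := fun n _ =>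
      abs_of_nonneg (by positivity)
    rw [Finset.sum_congr rfl habs, Finset.sum_const, Nat.card_Icc, nsmul_eq_mul]
    simp only [Nat.add_sub_cancel]
    rw [mul_one_div, div_self hN0]
    norm_num
  obtain ⟨L1, L2, L3⟩ := cosSum_lip_all N (fun _ => 1/(N:ℝ)) 1024 hsum0
    (Set.Icc (-(π * mval N)) (π * mval N))
  have hcnn : ∀ n : ℕ, 0 ≤ Real.sqrt (rhatN N * rhatM N M n) *
      (Real.sqrt 2 / Real.sqrt (π * mval N)) := fun n =>
    mul_nonneg (Real.sqrt_nonneg _) (div_nonneg (Real.sqrt_nonneg _) (Real.sqrt_nonneg _))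
  have hrNM0eq : rNM0 N M = cosSum N (fun n => Real.sqrt (rhatN N * rhatM N M n) *
      (Real.sqrt 2 / Real.sqrt (π * mval N))) := rfl
  have hsumc : ∑ n ∈ Finset.Icc 1 N, |Real.sqrt (rhatN N * rhatM N M n) *
      (Real.sqrt 2 / Real.sqrt (π * mval N))| ≤ 1024 := by
    have habs : ∀ n ∈ Finset.Icc 1 N, |Real.sqrt (rhatN N * rhatM N M n) *
        (Real.sqrt 2 / Real.sqrt (π * mval N))| = Real.sqrt (rhatN N * rhatM N M n) *
        (Real.sqrt 2 / Real.sqrt (π * mval N)) := fun n _ => abs_of_nonneg (hcnn n)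
    rw [Finset.sum_congr rfl habs]
    exact (coeff_sum_le N hN M hM1 hMP).trans (by norm_num)
  obtain ⟨K1, K2, K3⟩ := cosSum_lip_all N _ 1024 hsumc
    (Set.Icc (-(π * mval N)) (π * mval N))
  obtain ⟨P1, P2, P3⟩ := rNM_lip N hN M hM1 (Set.Icc (-(π * mval N)) (π * mval N))
  exact ⟨by rw [hrNeq]; exact L1, by rw [hrNeq]; exact L2, by rw [hrNeq]; exact L3,
    P1, P2, P3,
    by rw [hrNM0eq]; exact K1, by rw [hrNM0eq]; exact K2, by rw [hrNM0eq]; exact K3⟩
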